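/- The ν-index is monotone with respect to component-wise dominance: if citation vectors x and y (each extended by zeros to a common length) satisfy x_i ≤ y_i for all i, then ν(x) ≤ ν(y). -/
import Mathlib


open Finset

/-- Partial sum `S_k = x₁ + ⋯ + x_k` of a citation vector, with the natural
extension `S_k = S_m` for `k > m`. -/
def pSum {m : ℕ} (x : Fin m → ℕ) (k : ℕ) : ℕ :=
  ∑ i : Fin m, if (i : ℕ) < k then x i else 0

/-- `m*(j)`: the number of papers with at least `j` citations. -/
def mStar {m : ℕ} (x : Fin m → ℕ) (j : ℕ) : ℕ :=
  (Finset.univ.filter fun i => j ≤ x i).card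

/-- The Hirsch `h`-index: `h = max {j ≥ 1 : m*(j) ≥ j}` (max ∅ = 0). -/
noncomputable def hIndex {m : ℕ} (x : Fin m → ℕ) : ℕ :=
  sSup {j : ℕ | 1 ≤ j ∧ j ≤ mStar x j}

/-- The Egghe `g`-index: `g = max {1 ≤ k ≤ m : S_k ≥ k²}` (max ∅ = 0). -/
noncomputable def gIndex {m : ℕ} (x : Fin m → ℕ) : ℕ :=
  sSup {k : ℕ | 1 ≤ k ∧ k ≤ m ∧ k ^ 2 ≤ pSum x k}

/-- The unconstrained `g*`-index: `g* = max {k ≥ 1 : S_k ≥ k²}` (max ∅ = 0). -/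
noncomputable def gStar {m : ℕ} (x : Fin m → ℕ) : ℕ :=
  sSup {k : ℕ | 1 ≤ k ∧ k ^ 2 ≤ pSum x k}

/-- The `ν`-index: `ν = max {j ≥ 1 : Σ_{i : x_i ≥ j} x_i ≥ j²}` (max ∅ = 0). -/
noncomputable def nuIndex {m : ℕ} (x : Fin m → ℕ) : ℕ :=
  sSup {j : ℕ | 1 ≤ j ∧ j ^ 2 ≤ ∑ i ∈ Finset.univ.filter (fun i => j ≤ x i), x i}

/-- The tempered `ν̄`-index: `ν̄ = max {1 ≤ j ≤ m : Σ_{i : x_i ≥ j} x_i ≥ j²}` (max ∅ = 0). -/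
noncomputable def nuBar {m : ℕ} (x : Fin m → ℕ) : ℕ :=
  sSup {j : ℕ | 1 ≤ j ∧ j ≤ m ∧ j ^ 2 ≤ ∑ i ∈ Finset.univ.filter (fun i => j ≤ x i), x i}

/-- The parametric index `ν_α = max {j ≥ 1 : Σ_{i : x_i ≥ j} x_i^α ≥ j^(α+1)}` (max ∅ = 0),
with real powers. -/
noncomputable def nuAlpha {m : ℕ} (x : Fin m → ℕ) (α : ℝ) : ℕ :=
  sSup {j : ℕ | 1 ≤ j ∧
    (j : ℝ) ^ (α + 1) ≤ ∑ i ∈ Finset.univ.filter (fun i => j ≤ x i), (x i : ℝ) ^ α}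

/-- Extension of a finite citation vector by fictitious zeros. -/
def extByZero {m : ℕ} (x : Fin m → ℕ) (i : ℕ) : ℕ :=
  if h : i < m then x ⟨i, h⟩ else 0


lemma ext_filter_sum {m : ℕ} (x : Fin m → ℕ) (j N : ℕ) (hj : 1 ≤ j) (hN : m ≤ N) :
    ∑ i ∈ Finset.univ.filter (fun i => j ≤ x i), x i
      = ∑ k ∈ (Finset.range N).filter (fun k => j ≤ extByZero x k), extByZero x k := by
  rw [Finset.sum_filter, Finset.sum_filter]
  calc ∑ i : Fin m, (if j ≤ x i then x i else 0)
      = ∑ k ∈ Finset.range m, (if j ≤ extByZero x k then extByZero x k else 0) := by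
        rw [← Fin.sum_univ_eq_sum_range]
        refine Finset.sum_congr rfl fun i _ => ?_
        simp [extByZero, i.isLt]
    _ = ∑ k ∈ Finset.range N, (if j ≤ extByZero x k then extByZero x k else 0) := by
        apply Finset.sum_subset (Finset.range_subset_range.2 hN)
        intro k _ hk
        have hk' : ¬ k < m := by simpa using hk
        simp [extByZero, hk']

theorem stmt15 {m n : ℕ} (hm : 1 ≤ m) (hn : 1 ≤ n)
    (x : Fin m → ℕ) (y : Fin n → ℕ) (hx : Antitone x) (hy : Antitone y)
    (hdom : ∀ i : ℕ, extByZero x i ≤ extByZero y i) :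
    nuIndex x ≤ nuIndex y := by
  set N := max m n with hNdef
  have hxN : m ≤ N := le_max_left _ _
  have hyN : n ≤ N := le_max_right _ _
  have hsub : {j : ℕ | 1 ≤ j ∧ j ^ 2 ≤ ∑ i ∈ Finset.univ.filter (fun i => j ≤ x i), x i}
      ⊆ {j : ℕ | 1 ≤ j ∧ j ^ 2 ≤ ∑ i ∈ Finset.univ.filter (fun i => j ≤ y i), y i} := by
    rintro j ⟨hj, hjs⟩
    refine ⟨hj, ?_⟩
    rw [ext_filter_sum y j N hj hyN]
    rw [ext_filter_sum x j N hj hxN] at hjs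
    refine hjs.trans ?_
    calc ∑ k ∈ (Finset.range N).filter (fun k => j ≤ extByZero x k), extByZero x k
        ≤ ∑ k ∈ (Finset.range N).filter (fun k => j ≤ extByZero x k), extByZero y k :=
          Finset.sum_le_sum fun k _ => hdom k
      _ ≤ ∑ k ∈ (Finset.range N).filter (fun k => j ≤ extByZero y k), extByZero y k := by
          apply Finset.sum_le_sum_of_subset
          intro k hk
          simp only [Finset.mem_filter] at hk ⊢
          exact ⟨hk.1, hk.2.trans (hdom k)⟩
  have hbdd : BddAbove {j : ℕ | 1 ≤ j ∧ j ^ 2 ≤ ∑ i ∈ Finset.univ.filter (fun i => j ≤ y i), y i} := by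
    refine ⟨∑ i : Fin n, y i, ?_⟩
    rintro j ⟨hj, hjs⟩
    have h1 : j ≤ j ^ 2 := by nlinarith
    have h2 : ∑ i ∈ Finset.univ.filter (fun i => j ≤ y i), y i ≤ ∑ i : Fin n, y i :=
      Finset.sum_le_sum_of_subset (Finset.filter_subset _ _)
    omega
  rcases Set.eq_empty_or_nonempty
      {j : ℕ | 1 ≤ j ∧ j ^ 2 ≤ ∑ i ∈ Finset.univ.filter (fun i => j ≤ x i), x i} with he | hne
  · simp [nuIndex, he]
  · exact csSup_le_csSup hbdd hne hsub
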